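/- The van Est differentiation map VE : T•(Sym V) → Λ•V defined as VE = P ∘ j (composition of the perturbed projection of the column retract with the row inclusion) is explicitly given by VE(X₁ ⊗ ⋯ ⊗ X_k) = pr_V(X₁) ∧ ⋯ ∧ pr_V(X_k) for X₁,…,X_k ∈ Sym V; moreover VE is a morphism of differential graded algebras from (T•(Sym V), δ_ca, ⊗) to (Λ•V, 0, ∧). -/

import Mathlib

open TensorProduct

/-! ### The symmetric algebra of a module

Mathlib does not yet have the symmetric algebra, so we construct it as the
quotient of the tensor algebra by the commutativity relation. -/

/-- The relation on the tensor algebra whose quotient is the symmetric algebra. -/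
inductive SymRel (R : Type*) [CommRing R] (V : Type*) [AddCommGroup V] [Module R V] :
    TensorAlgebra R V → TensorAlgebra R V → Prop
  | mul_comm (a b : TensorAlgebra R V) : SymRel R V (a * b) (b * a)

/-- The symmetric algebra `Sym V` of an `R`-module `V`. -/
abbrev SymmAlg (R : Type*) [CommRing R] (V : Type*) [AddCommGroup V] [Module R V] : Type _ :=
  RingQuot (SymRel R V)

variable (R : Type*) [CommRing R] (V : Type*) [AddCommGroup V] [Module R V]

noncomputable instance : CommRing (SymmAlg R V) :=
  { (inferInstance : Ring (RingQuot (SymRel R V))) with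
    mul_comm := by
      intro a b
      obtain ⟨x, rfl⟩ := RingQuot.mkRingHom_surjective (SymRel R V) a
      obtain ⟨y, rfl⟩ := RingQuot.mkRingHom_surjective (SymRel R V) b
      rw [← map_mul, ← map_mul, RingQuot.mkRingHom_rel (SymRel.mul_comm x y)] }

/-- The canonical inclusion `V →ₗ Sym V` of the generators. -/
noncomputable def ιS : V →ₗ[R] SymmAlg R V :=
  (RingQuot.mkAlgHom R (SymRel R V)).toLinearMap ∘ₗ TensorAlgebra.ι R

/-! ### Tensor powers and the coalgebra differential -/

open scoped TensorProduct

section Tpow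

variable (R : Type*) [CommRing R] (S : Type*) [AddCommGroup S] [Module R S]

/-- The `k`-th tensor power `T^k S` of an `R`-module `S`. -/
abbrev Tpow (k : ℕ) : Type _ := PiTensorProduct R (fun _ : Fin k => S)

/-- Concatenation of tensor powers, `T^a S ⊗ T^b S →ₗ T^(a+b) S`:
the tensor multiplication of the tensor algebra. -/
noncomputable def concat (a b : ℕ) : Tpow R S a ⊗[R] Tpow R S b →ₗ[R] Tpow R S (a + b) :=
  (PiTensorProduct.reindex R (fun _ : Fin a ⊕ Fin b => S) finSumFinEquiv).toLinearMap ∘ₗ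
    (PiTensorProduct.tmulEquiv R S).toLinearMap

/-- The canonical identification `S ≃ T^1 S`. -/
noncomputable def toT1 : S ≃ₗ[R] Tpow R S 1 :=
  (PiTensorProduct.subsingletonEquiv (R := R) (s := fun _ : Fin 1 => S) (0 : Fin 1)).symm

/-- The canonical identification `T^(k+1) S ≃ T^k S ⊗ S` splitting off the last factor. -/
noncomputable def unsnoc (k : ℕ) : Tpow R S (k + 1) ≃ₗ[R] Tpow R S k ⊗[R] S :=
  ((PiTensorProduct.reindex R (fun _ : Fin (k + 1) => S) finSumFinEquiv.symm).trans
      (PiTensorProduct.tmulEquiv R S).symm).trans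
    (TensorProduct.congr (LinearEquiv.refl R _) (toT1 R S).symm)

/-- The canonical identification `S ⊗ S ≃ T^2 S`. -/
noncomputable def toT2 : S ⊗[R] S →ₗ[R] Tpow R S 2 :=
  concat R S 1 1 ∘ₗ TensorProduct.map (toT1 R S).toLinearMap (toT1 R S).toLinearMap

/-- The identification `T^a S ≃ T^b S` for `a = b`. -/
noncomputable def tcast {a b : ℕ} (h : a = b) : Tpow R S a ≃ₗ[R] Tpow R S b :=
  PiTensorProduct.reindex R (fun _ : Fin a => S) (finCongr h)

variable {S} in
/-- The coalgebra differential `δ_ca : T^k S → T^(k+1) S` obtained by extending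
`−Δ̄ : S → S ⊗ S ≃ T² S` (for a given reduced coproduct `Δ̄ = Db`) as a graded
derivation with respect to the tensor product, i.e.
`δ_ca = ∑_{i=1}^k (−1)^i (id^{⊗(i−1)} ⊗ Δ̄ ⊗ id^{⊗(k−i)})`, here realized through the
recursion `δ_ca(X ⊗ φ) = δ_ca(X) ⊗ φ + (−1)^k X ⊗ (−Δ̄ φ)` for `X ∈ T^k S`, `φ ∈ S`. -/
noncomputable def deltaCa (Db : S →ₗ[R] S ⊗[R] S) : (k : ℕ) → Tpow R S k →ₗ[R] Tpow R S (k + 1)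
  | 0 => 0
  | (k + 1) =>
      (concat R S (k + 1) 1 ∘ₗ TensorProduct.map (deltaCa Db k) (toT1 R S).toLinearMap
        + ((-1 : ℤ) ^ k) •
          (concat R S k 2 ∘ₗ TensorProduct.map LinearMap.id (toT2 R S ∘ₗ (-Db))))
        ∘ₗ (unsnoc R S (k + 1 - 1)).toLinearMap

end Tpow

section VE

variable {R : Type*} [CommRing R] [Algebra ℚ R] {V : Type*} [AddCommGroup V] [Module R V]

/-- The total module `⨁ₖ T^k(Sym V)` of the coalgebra complex. -/
abbrev TcaTot (R : Type*) [CommRing R] (V : Type*) [AddCommGroup V] [Module R V] :=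
  DirectSum ℕ (fun k => Tpow R (SymmAlg R V) k)

/-- The total coalgebra differential `δ_ca` on `⨁ₖ T^k(Sym V)`, for the reduced
shuffle coproduct `Db`. -/
noncomputable def deltaCaTot
    (Db : SymmAlg R V →ₗ[R] SymmAlg R V ⊗[R] SymmAlg R V) :
    TcaTot R V →ₗ[R] TcaTot R V :=
  DirectSum.toModule R ℕ _ fun k =>
    DirectSum.lof R ℕ (fun k => Tpow R (SymmAlg R V) k) (k + 1) ∘ₗ deltaCa R Db k

/-- The van Est differentiation map
`VE(X₁ ⊗ ⋯ ⊗ X_k) = pr_V(X₁) ∧ ⋯ ∧ pr_V(X_k) : T^•(Sym V) → Λ^• V`. -/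
noncomputable def vanEstMap (prV : SymmAlg R V →ₗ[R] V) :
    TcaTot R V →ₗ[R] ExteriorAlgebra R V :=
  DirectSum.toModule R ℕ _ fun k =>
    PiTensorProduct.lift
      ((MultilinearMap.mkPiAlgebraFin R k (ExteriorAlgebra R V)).compLinearMap
        fun _ => ExteriorAlgebra.ι R ∘ₗ prV)

/-- The van Est integration map
`VE⁻¹(ξ₁ ∧ ⋯ ∧ ξ_ℓ) = (1/ℓ!) ∑_σ sign(σ) ξ_(σ(1)) ⊗ ⋯ ⊗ ξ_(σ(ℓ))`. -/
noncomputable def vanEstInv : ExteriorAlgebra R V →ₗ[R] TcaTot R V :=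
  ExteriorAlgebra.liftAlternating fun ℓ =>
    (DirectSum.lof R ℕ (fun k => Tpow R (SymmAlg R V) k) ℓ).compAlternatingMap
      (algebraMap ℚ R ((ℓ.factorial : ℚ)⁻¹) •
        MultilinearMap.alternatization
          ((PiTensorProduct.tprod R).compLinearMap fun _ : Fin ℓ => ιS R V))

end VE

/-! ### Auxiliary lemmas -/

section AuxTpow

variable {R : Type*} [CommRing R] {S : Type*} [AddCommGroup S] [Module R S]

lemma concat_tprod (a b : ℕ) (x : Fin a → S) (y : Fin b → S) :
    concat R S a b (PiTensorProduct.tprod R x ⊗ₜ[R] PiTensorProduct.tprod R y)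
      = PiTensorProduct.tprod R (fun i => Sum.elim x y (finSumFinEquiv.symm i)) := by
  simp [concat, PiTensorProduct.reindex_tprod]

lemma toT1_apply (s : S) :
    toT1 R S s = PiTensorProduct.tprod R (fun _ : Fin 1 => s) := by
  rw [toT1, LinearEquiv.symm_apply_eq, PiTensorProduct.subsingletonEquiv_apply_tprod]

lemma unsnoc_tprod (k : ℕ) (X : Fin (k + 1) → S) :
    unsnoc R S k (PiTensorProduct.tprod R X)
      = PiTensorProduct.tprod R (fun i : Fin k => X i.castSucc) ⊗ₜ[R] X (Fin.last k) := by
  have h1 : (PiTensorProduct.reindex R (fun _ : Fin (k + 1) => S) finSumFinEquiv.symm)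
      (PiTensorProduct.tprod R X)
      = PiTensorProduct.tprod R (fun p : Fin k ⊕ Fin 1 => X (finSumFinEquiv p)) := by
    rw [PiTensorProduct.reindex_tprod]
    simp
  rw [unsnoc, LinearEquiv.trans_apply, LinearEquiv.trans_apply, h1,
    PiTensorProduct.tmulEquiv_symm_apply, TensorProduct.congr_tmul]
  congr 1
  · rw [toT1, LinearEquiv.symm_symm, PiTensorProduct.subsingletonEquiv_apply_tprod]
    have h2 : finSumFinEquiv (Sum.inr (0 : Fin 1)) = Fin.last k := Fin.ext (by simp)
    rw [h2]

lemma deltaCa_succ (Db : S →ₗ[R] S ⊗[R] S) (k : ℕ) :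
    deltaCa R Db (k + 1) =
      (concat R S (k + 1) 1 ∘ₗ TensorProduct.map (deltaCa R Db k) (toT1 R S).toLinearMap
        + ((-1 : ℤ) ^ k) •
          (concat R S k 2 ∘ₗ TensorProduct.map LinearMap.id (toT2 R S ∘ₗ (-Db))))
        ∘ₗ (unsnoc R S k).toLinearMap := by
  rw [deltaCa]
  rfl

end AuxTpow

section AuxVE

variable {R : Type*} [CommRing R] {V : Type*} [AddCommGroup V] [Module R V]

/-- The `k`-th component of the van Est map. -/
noncomputable def VEk (prV : SymmAlg R V →ₗ[R] V) (k : ℕ) :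
    Tpow R (SymmAlg R V) k →ₗ[R] ExteriorAlgebra R V :=
  PiTensorProduct.lift
    ((MultilinearMap.mkPiAlgebraFin R k (ExteriorAlgebra R V)).compLinearMap
      fun _ => ExteriorAlgebra.ι R ∘ₗ prV)

lemma vanEstMap_lof (prV : SymmAlg R V →ₗ[R] V) (k : ℕ) (x : Tpow R (SymmAlg R V) k) :
    vanEstMap prV (DirectSum.lof R ℕ (fun k => Tpow R (SymmAlg R V) k) k x)
      = VEk prV k x := by
  rw [vanEstMap, DirectSum.toModule_lof]
  rfl

lemma VEk_tprod (prV : SymmAlg R V →ₗ[R] V) (k : ℕ) (X : Fin k → SymmAlg R V) :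
    VEk prV k (PiTensorProduct.tprod R X)
      = (List.ofFn fun j => ExteriorAlgebra.ι R (prV (X j))).prod := by
  simp [VEk, MultilinearMap.mkPiAlgebraFin_apply]

lemma VEk_mul (prV : SymmAlg R V →ₗ[R] V) (a b : ℕ)
    (x : Tpow R (SymmAlg R V) a) (y : Tpow R (SymmAlg R V) b) :
    VEk prV (a + b) (concat R (SymmAlg R V) a b (x ⊗ₜ[R] y))
      = VEk prV a x * VEk prV b y := by
  induction x using PiTensorProduct.induction_on with
  | smul_tprod r f =>
    induction y using PiTensorProduct.induction_on with
    | smul_tprod s g =>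
      have core : VEk prV (a + b)
          (concat R (SymmAlg R V) a b (PiTensorProduct.tprod R f ⊗ₜ[R] PiTensorProduct.tprod R g))
          = VEk prV a (PiTensorProduct.tprod R f) * VEk prV b (PiTensorProduct.tprod R g) := by
        rw [concat_tprod, VEk_tprod, VEk_tprod, VEk_tprod, ← List.prod_append, List.ofFn_add]
        have hl : (fun i : Fin a => ExteriorAlgebra.ι R
              (prV (Sum.elim f g (finSumFinEquiv.symm (Fin.castAdd b i)))))
            = fun j => ExteriorAlgebra.ι R (prV (f j)) :=
          funext fun i => by rw [finSumFinEquiv_symm_apply_castAdd, Sum.elim_inl]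
        have hr : (fun i : Fin b => ExteriorAlgebra.ι R
              (prV (Sum.elim f g (finSumFinEquiv.symm (Fin.natAdd a i)))))
            = fun j => ExteriorAlgebra.ι R (prV (g j)) :=
          funext fun i => by rw [finSumFinEquiv_symm_apply_natAdd, Sum.elim_inr]
        exact congrArg₂ (fun l₁ l₂ => (List.ofFn l₁ ++ List.ofFn l₂).prod) hl hr
      simp only [TensorProduct.smul_tmul_smul, map_smul, core, smul_mul_assoc,
        mul_smul_comm, smul_smul]
      rw [mul_comm r s]
    | add y₁ y₂ h1 h2 =>
      rw [TensorProduct.tmul_add, map_add, map_add, h1, h2, map_add, mul_add]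
  | add x₁ x₂ h1 h2 =>
    rw [TensorProduct.add_tmul, map_add, map_add, h1, h2, map_add, add_mul]

lemma VEk_toT1 (prV : SymmAlg R V →ₗ[R] V) (s : SymmAlg R V) :
    VEk prV 1 (toT1 R (SymmAlg R V) s) = ExteriorAlgebra.ι R (prV s) := by
  rw [toT1_apply, VEk_tprod]
  simp

/-- The auxiliary map `a ⊗ b ↦ ι (prV a) * ι (prV b)`. -/
noncomputable def Lmap (prV : SymmAlg R V →ₗ[R] V) :
    SymmAlg R V ⊗[R] SymmAlg R V →ₗ[R] ExteriorAlgebra R V :=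
  LinearMap.mul' R _ ∘ₗ
    TensorProduct.map (ExteriorAlgebra.ι R ∘ₗ prV) (ExteriorAlgebra.ι R ∘ₗ prV)

lemma Lmap_tmul (prV : SymmAlg R V →ₗ[R] V) (a b : SymmAlg R V) :
    Lmap prV (a ⊗ₜ[R] b) = ExteriorAlgebra.ι R (prV a) * ExteriorAlgebra.ι R (prV b) := by
  simp [Lmap]

lemma VEk_toT2 (prV : SymmAlg R V →ₗ[R] V) (z : SymmAlg R V ⊗[R] SymmAlg R V) :
    VEk prV 2 (toT2 R (SymmAlg R V) z) = Lmap prV z := by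
  induction z using TensorProduct.induction_on with
  | zero => simp
  | tmul a b =>
    rw [toT2, LinearMap.comp_apply, TensorProduct.map_tmul, Lmap_tmul]
    exact (VEk_mul prV 1 1 _ _).trans (by simp [VEk_toT1])
  | add z₁ z₂ h1 h2 => rw [map_add, map_add, h1, h2, map_add]

/-- Two algebra maps out of the symmetric algebra agreeing on generators are equal. -/
lemma symmAlgHom_ext {A : Type*} [Semiring A] [Algebra R A]
    {f g : SymmAlg R V →ₐ[R] A} (h : ∀ v, f (ιS R V v) = g (ιS R V v)) : f = g := by
  have key : f.comp (RingQuot.mkAlgHom R (SymRel R V))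
      = g.comp (RingQuot.mkAlgHom R (SymRel R V)) := by
    apply TensorAlgebra.hom_ext
    apply LinearMap.ext
    intro v
    exact h v
  apply AlgHom.ext
  intro a
  obtain ⟨x, rfl⟩ := RingQuot.mkAlgHom_surjective R (SymRel R V) a
  exact DFunLike.congr_fun key x

lemma half_cancel {S : Type*} [CommRing S] [Algebra ℚ S] {M : Type*} [AddCommGroup M]
    [Module S M] (x : M) (h : x + x = 0) : x = 0 := by
  have h2 : (algebraMap ℚ S 2) • x = 0 := by
    rw [map_ofNat, ofNat_smul_eq_nsmul (R := S) 2 x]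
    simpa [two_nsmul] using h
  calc x = ((algebraMap ℚ S (1/2)) * (algebraMap ℚ S 2)) • x := by
          rw [← map_mul]
          norm_num
    _ = (algebraMap ℚ S (1/2)) • ((algebraMap ℚ S 2) • x) := mul_smul _ _ _
    _ = 0 := by rw [h2, smul_zero]

lemma Lmap_comm (prV : SymmAlg R V →ₗ[R] V) (z : SymmAlg R V ⊗[R] SymmAlg R V) :
    Lmap prV ((Algebra.TensorProduct.comm R (SymmAlg R V) (SymmAlg R V)) z)
      = - Lmap prV z := by
  induction z using TensorProduct.induction_on with
  | zero => simp
  | tmul a b =>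
    rw [Algebra.TensorProduct.comm_tmul, Lmap_tmul, Lmap_tmul]
    exact eq_neg_of_add_eq_zero_left (ExteriorAlgebra.ι_add_mul_swap (prV b) (prV a))
  | add z₁ z₂ h1 h2 => rw [map_add, map_add, h1, h2, map_add, neg_add]

end AuxVE

section AuxKey

variable {R : Type*} [CommRing R] [Algebra ℚ R] {V : Type*} [AddCommGroup V] [Module R V]

lemma Lmap_Db (Δ : SymmAlg R V →ₐ[R] SymmAlg R V ⊗[R] SymmAlg R V)
    (hΔ : ∀ v : V, Δ (ιS R V v) = 1 ⊗ₜ[R] ιS R V v + ιS R V v ⊗ₜ[R] 1)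
    (prV : SymmAlg R V →ₗ[R] V) (hpr1 : prV 1 = 0)
    (Db : SymmAlg R V →ₗ[R] SymmAlg R V ⊗[R] SymmAlg R V)
    (hDb : Db = Δ.toLinearMap
      - (TensorProduct.mk R (SymmAlg R V) (SymmAlg R V) 1
        + (TensorProduct.mk R (SymmAlg R V) (SymmAlg R V)).flip 1))
    (φ : SymmAlg R V) : Lmap prV (Db φ) = 0 := by
  have hcomm : ((Algebra.TensorProduct.comm R (SymmAlg R V) (SymmAlg R V) :
        SymmAlg R V ⊗[R] SymmAlg R V ≃ₐ[R] SymmAlg R V ⊗[R] SymmAlg R V) :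
        SymmAlg R V ⊗[R] SymmAlg R V →ₐ[R] SymmAlg R V ⊗[R] SymmAlg R V).comp Δ = Δ := by
    apply symmAlgHom_ext
    intro v
    rw [AlgHom.comp_apply, hΔ, AlgEquiv.coe_algHom, map_add,
      Algebra.TensorProduct.comm_tmul, Algebra.TensorProduct.comm_tmul, add_comm]
  have e : (Algebra.TensorProduct.comm R (SymmAlg R V) (SymmAlg R V)) (Δ φ) = Δ φ :=
    DFunLike.congr_fun hcomm φ
  have hΔ0 : Lmap prV (Δ φ) = 0 := by
    have h1 : Lmap prV (Δ φ) = - Lmap prV (Δ φ) := by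
      conv_lhs => rw [← e]
      exact Lmap_comm prV (Δ φ)
    refine half_cancel (S := R) _ ?_
    nth_rewrite 2 [h1]
    exact add_neg_cancel _
  rw [hDb]
  simp only [LinearMap.sub_apply, LinearMap.add_apply, TensorProduct.mk_apply,
    LinearMap.flip_apply, map_sub, map_add, Lmap_tmul, hpr1, map_zero, zero_mul, mul_zero,
    AlgHom.toLinearMap_apply, hΔ0, add_zero, sub_zero]

lemma VEk_deltaCa (prV : SymmAlg R V →ₗ[R] V)
    (Db : SymmAlg R V →ₗ[R] SymmAlg R V ⊗[R] SymmAlg R V)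
    (hkey : ∀ φ, Lmap prV (Db φ) = 0) :
    ∀ (k : ℕ) (x : Tpow R (SymmAlg R V) k),
      VEk prV (k + 1) (deltaCa R Db k x) = 0 := by
  intro k
  induction k with
  | zero =>
    intro x
    rw [deltaCa]
    simp
  | succ k ih =>
    intro x
    induction x using PiTensorProduct.induction_on with
    | smul_tprod r X =>
      have core : VEk prV (k + 1 + 1) (deltaCa R Db (k + 1) (PiTensorProduct.tprod R X))
          = 0 := by
        have hstep : deltaCa R Db (k + 1) (PiTensorProduct.tprod R X) =
            concat R (SymmAlg R V) (k + 1) 1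
              ((deltaCa R Db k (PiTensorProduct.tprod R fun i => X i.castSucc)) ⊗ₜ[R]
                toT1 R (SymmAlg R V) (X (Fin.last k)))
            + ((-1 : ℤ) ^ k) • concat R (SymmAlg R V) k 2
                ((PiTensorProduct.tprod R fun i : Fin k => X i.castSucc) ⊗ₜ[R]
                  (toT2 R (SymmAlg R V) (-(Db (X (Fin.last k)))))) := by
          rw [deltaCa_succ, LinearMap.comp_apply, LinearEquiv.coe_coe, unsnoc_tprod]
          rfl
        rw [hstep, map_add, map_zsmul]
        have t1 : VEk prV (k + 1 + 1)
            (concat R (SymmAlg R V) (k + 1) 1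
              ((deltaCa R Db k (PiTensorProduct.tprod R fun i => X i.castSucc)) ⊗ₜ[R]
                toT1 R (SymmAlg R V) (X (Fin.last k))))
            = VEk prV (k + 1) (deltaCa R Db k (PiTensorProduct.tprod R fun i => X i.castSucc))
              * VEk prV 1 (toT1 R (SymmAlg R V) (X (Fin.last k))) :=
          VEk_mul prV (k + 1) 1 _ _
        have t2 : VEk prV (k + 1 + 1)
            (concat R (SymmAlg R V) k 2
              ((PiTensorProduct.tprod R fun i : Fin k => X i.castSucc) ⊗ₜ[R]
                (toT2 R (SymmAlg R V) (-(Db (X (Fin.last k)))))))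
            = VEk prV k (PiTensorProduct.tprod R fun i : Fin k => X i.castSucc)
              * VEk prV 2 (toT2 R (SymmAlg R V) (-(Db (X (Fin.last k))))) :=
          VEk_mul prV k 2 _ _
        rw [t1, t2, ih, zero_mul, zero_add]
        have t3 : VEk prV 2 (toT2 R (SymmAlg R V) (-(Db (X (Fin.last k))))) = 0 := by
          rw [map_neg, map_neg, VEk_toT2, hkey, neg_zero]
        rw [t3, mul_zero, smul_zero]
      rw [map_smul, map_smul, core, smul_zero]
    | add x y hx hy => rw [map_add, map_add, hx, hy, add_zero]

end AuxKey


/-- **The van Est differentiation map.**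
The map `VE : T^•(Sym V) → Λ^• V`, `VE(X₁ ⊗ ⋯ ⊗ X_k) = pr_V(X₁) ∧ ⋯ ∧ pr_V(X_k)`,
is a morphism of differential graded algebras from `(T^•(Sym V), δ_ca, ⊗)` to
`(Λ^• V, 0, ∧)`: it annihilates `δ_ca`-images (chain map to the zero differential),
is multiplicative for the concatenation product, and unital. -/
theorem vanEst_differentiation
    {R : Type*} [CommRing R] [Algebra ℚ R]
    {V : Type*} [AddCommGroup V] [Module R V]
    (Δ : SymmAlg R V →ₐ[R] SymmAlg R V ⊗[R] SymmAlg R V)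
    (hΔ : ∀ v : V, Δ (ιS R V v) = 1 ⊗ₜ[R] ιS R V v + ιS R V v ⊗ₜ[R] 1)
    (prV : SymmAlg R V →ₗ[R] V)
    (hprV1 : ∀ v : V, prV (ιS R V v) = v)
    (hprV0 : ∀ (s : ℕ) (x : Fin s → V), s ≠ 1 → prV (∏ j, ιS R V (x j)) = 0)
    (Db : SymmAlg R V →ₗ[R] SymmAlg R V ⊗[R] SymmAlg R V)
    (hDb : Db = Δ.toLinearMap
      - (TensorProduct.mk R (SymmAlg R V) (SymmAlg R V) 1
        + (TensorProduct.mk R (SymmAlg R V) (SymmAlg R V)).flip 1)) :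
    -- the explicit formula
    (∀ (k : ℕ) (X : Fin k → SymmAlg R V),
      vanEstMap prV
          (DirectSum.lof R ℕ (fun k => Tpow R (SymmAlg R V) k) k (PiTensorProduct.tprod R X))
        = (List.ofFn fun j => ExteriorAlgebra.ι R (prV (X j))).prod) ∧
    -- chain map into `(Λ^• V, 0)`
    (∀ x : TcaTot R V, vanEstMap prV (deltaCaTot Db x) = 0) ∧
    -- multiplicative
    (∀ (k l : ℕ) (x : Tpow R (SymmAlg R V) k) (y : Tpow R (SymmAlg R V) l),
      vanEstMap prV
          (DirectSum.lof R ℕ (fun k => Tpow R (SymmAlg R V) k) (k + l)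
            (concat R (SymmAlg R V) k l (x ⊗ₜ[R] y)))
        = vanEstMap prV (DirectSum.lof R ℕ (fun k => Tpow R (SymmAlg R V) k) k x)
          * vanEstMap prV (DirectSum.lof R ℕ (fun k => Tpow R (SymmAlg R V) k) l y)) ∧
    -- unital
    (vanEstMap prV
        (DirectSum.lof R ℕ (fun k => Tpow R (SymmAlg R V) k) 0
          ((PiTensorProduct.isEmptyEquiv (Fin 0)).symm (1 : R)))
      = 1) := by
  have hpr1 : prV 1 = 0 := by
    have h := hprV0 0 (fun i => i.elim0) (by norm_num)
    simpa using h
  have hkey : ∀ φ, Lmap prV (Db φ) = 0 := Lmap_Db Δ hΔ prV hpr1 Db hDb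
  refine ⟨?_, ?_, ?_, ?_⟩
  · intro k X
    rw [vanEstMap_lof, VEk_tprod]
  · intro x
    induction x using DirectSum.induction_on with
    | zero => simp
    | of k y =>
      rw [← DirectSum.lof_eq_of R, deltaCaTot, DirectSum.toModule_lof, LinearMap.comp_apply,
        vanEstMap_lof, VEk_deltaCa prV Db hkey]
    | add x y hx hy => rw [map_add, map_add, hx, hy, add_zero]
  · intro k l x y
    rw [vanEstMap_lof, vanEstMap_lof, vanEstMap_lof, VEk_mul]
  · rw [vanEstMap_lof, PiTensorProduct.isEmptyEquiv_symm_apply, map_smul, VEk_tprod]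
    simp
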